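/- Let F = (f¹,…,fⁿ) : ℝⁿ → ℝⁿ be a polynomial map with nowhere zero Jacobian determinant such that F(0,…,0) = (0,…,0). Let s = (s₁,…,sₙ) be positive integers, and suppose for each i the component f^i is written as f^i = Σ_{l=1}^{m_i} f^i_l, where each f^i_l is quasi-homogeneous of weighted degree l with respect to s and the top part f^i_{m_i} is not identically zero. If the system f¹_{m_1}(x) = ⋯ = fⁿ_{m_n}(x) = 0 has only the trivial solution x = 0 in ℝⁿ, then F is injective. -/

import Mathlib

open MvPolynomial Filter


noncomputable def evalGrad {n : ℕ} (p : MvPolynomial (Fin n) ℝ) (x : Fin n → ℝ) :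
    (Fin n → ℝ) →L[ℝ] ℝ :=
  ∑ j, MvPolynomial.eval x (pderiv j p) • (ContinuousLinearMap.proj j : (Fin n → ℝ) →L[ℝ] ℝ)

theorem evalGrad_apply {n : ℕ} (p : MvPolynomial (Fin n) ℝ) (x v : Fin n → ℝ) :
    evalGrad p x v = ∑ j, MvPolynomial.eval x (pderiv j p) * v j := by
  simp [evalGrad]

theorem hasStrictFDerivAt_eval {n : ℕ} (p : MvPolynomial (Fin n) ℝ) (x : Fin n → ℝ) :
    HasStrictFDerivAt (fun y => MvPolynomial.eval y p) (evalGrad p x) x := by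
  induction p using MvPolynomial.induction_on with
  | C a =>
      simp only [eval_C]
      have : evalGrad (C a : MvPolynomial (Fin n) ℝ) x = 0 := by
        simp [evalGrad]
      rw [this]
      exact hasStrictFDerivAt_const a x
  | add p q hp hq =>
      have : evalGrad (p + q) x = evalGrad p x + evalGrad q x := by
        simp [evalGrad, Finset.sum_add_distrib, add_smul]
      rw [this]
      simp only [map_add]
      exact hp.add hq
  | mul_X p j hp =>
      have hXj : HasStrictFDerivAt (fun y : Fin n → ℝ => y j)
          (ContinuousLinearMap.proj j : (Fin n → ℝ) →L[ℝ] ℝ) x :=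
        (ContinuousLinearMap.proj j : (Fin n → ℝ) →L[ℝ] ℝ).hasStrictFDerivAt
      have h := hp.mul hXj
      have heq : (MvPolynomial.eval x p) • (ContinuousLinearMap.proj j : (Fin n → ℝ) →L[ℝ] ℝ)
          + (x j) • evalGrad p x = evalGrad (p * X j) x := by
        ext v
        simp only [ContinuousLinearMap.add_apply, ContinuousLinearMap.smul_apply,
          ContinuousLinearMap.proj_apply, smul_eq_mul, evalGrad_apply]
        have : ∀ k, MvPolynomial.eval x (pderiv k (p * X j)) =
            MvPolynomial.eval x (pderiv k p) * x j + (if j = k then MvPolynomial.eval x p else 0) := by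
          intro k
          rw [pderiv_mul]
          simp [pderiv_X, Pi.single_apply]
          split <;> simp [mul_comm]
        simp only [this, add_mul, Finset.sum_add_distrib]
        have h1 : ∑ k, (if j = k then MvPolynomial.eval x p else 0) * v k
            = MvPolynomial.eval x p * v j := by
          rw [Finset.sum_eq_single j] <;> simp +contextual [eq_comm]
        rw [h1, Finset.mul_sum]
        have h2 : ∀ k, x j * (MvPolynomial.eval x (pderiv k p) * v k)
            = MvPolynomial.eval x (pderiv k p) * x j * v k := fun k => by ring
        rw [Finset.sum_congr rfl fun k _ => h2 k]
        ring
      rw [← heq]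
      have : (fun y => MvPolynomial.eval y (p * X j)) = fun y : Fin n → ℝ =>
          MvPolynomial.eval y p * y j := by
        funext y; simp
      rw [this]
      exact h

namespace CimaAux

variable {n : ℕ}

noncomputable def Fmap (f : Fin n → MvPolynomial (Fin n) ℝ) : (Fin n → ℝ) → (Fin n → ℝ) :=
  fun x i => MvPolynomial.eval x (f i)

theorem continuous_Fmap (f : Fin n → MvPolynomial (Fin n) ℝ) : Continuous (Fmap f) :=
  continuous_pi fun i => MvPolynomial.continuous_eval (f i)

noncomputable def jac (f : Fin n → MvPolynomial (Fin n) ℝ) (x : Fin n → ℝ) :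
    (Fin n → ℝ) →L[ℝ] (Fin n → ℝ) :=
  ContinuousLinearMap.pi fun i => evalGrad (f i) x

theorem hasStrictFDerivAt_Fmap (f : Fin n → MvPolynomial (Fin n) ℝ) (x : Fin n → ℝ) :
    HasStrictFDerivAt (Fmap f) (jac f x) x :=
  hasStrictFDerivAt_pi.2 fun i => hasStrictFDerivAt_eval (f i) x

theorem exists_chart (f : Fin n → MvPolynomial (Fin n) ℝ)
    (hJ : ∀ x : Fin n → ℝ,
      Matrix.det (Matrix.of fun i j : Fin n =>
        MvPolynomial.eval x (MvPolynomial.pderiv j (f i))) ≠ 0)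
    (x : Fin n → ℝ) :
    ∃ e : OpenPartialHomeomorph (Fin n → ℝ) (Fin n → ℝ), x ∈ e.source ∧ ⇑e = Fmap f := by
  set M : Matrix (Fin n) (Fin n) ℝ :=
    Matrix.of fun i j : Fin n => MvPolynomial.eval x (MvPolynomial.pderiv j (f i)) with hM
  have hdet : LinearMap.det (Matrix.toLin' M) ≠ 0 := by
    rw [LinearMap.det_toLin']; exact hJ x
  set eL : (Fin n → ℝ) ≃ₗ[ℝ] (Fin n → ℝ) := LinearMap.equivOfDetNeZero _ hdet with heL
  have hcoe : (eL.toContinuousLinearEquiv : (Fin n → ℝ) →L[ℝ] (Fin n → ℝ)) = jac f x := by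
    ext v i
    have h1 : (eL.toContinuousLinearEquiv : (Fin n → ℝ) →L[ℝ] (Fin n → ℝ)) v
        = Matrix.toLin' M v := by
      simp [heL]
    rw [h1]
    simp [jac, Matrix.toLin'_apply, Matrix.mulVec, dotProduct, evalGrad_apply, hM]
  have hst : HasStrictFDerivAt (Fmap f)
      ((eL.toContinuousLinearEquiv : (Fin n → ℝ) ≃L[ℝ] (Fin n → ℝ)) :
        (Fin n → ℝ) →L[ℝ] (Fin n → ℝ)) x := by
    rw [hcoe]; exact hasStrictFDerivAt_Fmap f x
  exact ⟨HasStrictFDerivAt.toOpenPartialHomeomorph (Fmap f) hst, HasStrictFDerivAt.mem_toOpenPartialHomeomorph_source hst,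
    HasStrictFDerivAt.toOpenPartialHomeomorph_coe hst⟩

end CimaAux

namespace CimaAux

theorem norm_bound {n : ℕ} (hn : 0 < n) (f : Fin n → MvPolynomial (Fin n) ℝ)
    (s : Fin n → ℕ) (hs : ∀ j, 0 < s j)
    (m : Fin n → ℕ) (hm : ∀ i, 1 ≤ m i) (fc : Fin n → ℕ → MvPolynomial (Fin n) ℝ)
    (hdecomp : ∀ i, f i = ∑ l ∈ Finset.Icc 1 (m i), fc i l)
    (hqh : ∀ i, ∀ l ∈ Finset.Icc 1 (m i), ∀ lam : ℝ, 0 < lam → ∀ x : Fin n → ℝ,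
      MvPolynomial.eval (fun j => lam ^ s j * x j) (fc i l) =
        lam ^ l * MvPolynomial.eval x (fc i l))
    (hsol : ∀ x : Fin n → ℝ, (∀ i, MvPolynomial.eval x (fc i (m i)) = 0) → x = 0)
    (R : ℝ) (hR : 0 ≤ R) :
    ∃ r : ℝ, 0 ≤ r ∧ ∀ x : Fin n → ℝ, ‖Fmap f x‖ ≤ R → ‖x‖ ≤ r := by
  classical
  set N : ℕ := ∏ j, s j with hNdef
  have hdvd : ∀ j, s j ∣ N := fun j => Finset.dvd_prod_of_mem s (Finset.mem_univ j)
  have hN1 : 1 ≤ N := Nat.one_le_iff_ne_zero.2 (by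
    simp only [hNdef, Finset.prod_ne_zero_iff]
    exact fun j _ => (hs j).ne')
  set e : Fin n → ℕ := fun j => 2 * (N / s j) with hedef
  have hse : ∀ j, s j * e j = 2 * N := by
    intro j
    have : s j * (N / s j) = N := Nat.mul_div_cancel' (hdvd j)
    calc s j * (2 * (N / s j)) = 2 * (s j * (N / s j)) := by ring
    _ = 2 * N := by rw [this]
  have he1 : ∀ j, 1 ≤ e j := by
    intro j
    have h1 : 1 ≤ N / s j := Nat.one_le_div_iff (hs j) |>.2 (Nat.le_of_dvd (by omega) (hdvd j))
    simp only [hedef]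
    omega
  set W : (Fin n → ℝ) → ℝ := fun x => ∑ j, |x j| ^ (e j) with hWdef
  have hWcont : Continuous W := by
    apply continuous_finset_sum
    exact fun j _ => ((continuous_apply j).abs).pow _
  have hWnonneg : ∀ x, 0 ≤ W x := fun x =>
    Finset.sum_nonneg fun j _ => pow_nonneg (abs_nonneg _) _
  have hW0 : W 0 = 0 := by
    simp only [hWdef, Pi.zero_apply, abs_zero]
    exact Finset.sum_eq_zero fun j _ => zero_pow (by have := he1 j; omega)
  have hWpos : ∀ x : Fin n → ℝ, x ≠ 0 → 0 < W x := by
    intro x hx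
    obtain ⟨j, hj⟩ := Function.ne_iff.1 hx
    have hterm : 0 < |x j| ^ (e j) := pow_pos (abs_pos.2 hj) _
    exact lt_of_lt_of_le hterm (Finset.single_le_sum (f := fun k => |x k| ^ (e k))
      (fun k _ => pow_nonneg (abs_nonneg _) _) (Finset.mem_univ j))
  have hWscale : ∀ lam : ℝ, 0 < lam → ∀ x, W (fun j => lam ^ s j * x j) = lam ^ (2 * N) * W x := by
    intro lam hlam x
    simp only [hWdef, Finset.mul_sum]
    apply Finset.sum_congr rfl
    intro j _
    rw [abs_mul, abs_of_pos (pow_pos hlam _), mul_pow, ← pow_mul, hse j]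
  set S : Set (Fin n → ℝ) := W ⁻¹' {1} with hSdef
  have huS_abs : ∀ u ∈ S, ∀ j, |u j| ≤ 1 := by
    intro u hu j
    have h1 : |u j| ^ (e j) ≤ 1 := by
      have := Finset.single_le_sum (f := fun k => |u k| ^ (e k))
        (fun k _ => pow_nonneg (abs_nonneg _) _) (Finset.mem_univ j)
      have hu1 : W u = 1 := hu
      linarith [this, hu1.le]
    exact (pow_le_one_iff_of_nonneg (abs_nonneg _) (by have := he1 j; omega)).1 h1
  have hScompact : IsCompact S := by
    apply Metric.isCompact_of_isClosed_isBounded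
    · exact (isClosed_singleton).preimage hWcont
    · apply (Metric.isBounded_closedBall (x := (0 : Fin n → ℝ)) (r := 1)).subset
      intro u hu
      rw [Metric.mem_closedBall, dist_zero_right]
      exact pi_norm_le_iff_of_nonneg zero_le_one |>.2 fun j => by
        rw [Real.norm_eq_abs]; exact huS_abs u hu j
  have hSne : S.Nonempty := by
    refine ⟨Pi.single ⟨0, hn⟩ 1, ?_⟩
    show W _ = 1
    simp only [hWdef]
    rw [Finset.sum_eq_single ⟨0, hn⟩]
    · simp
    · intro j _ hj
      rw [Pi.single_apply, if_neg (by exact fun h => hj h)]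
      simp only [abs_zero]
      exact zero_pow (by have := he1 j; omega)
    · simp
  set G : (Fin n → ℝ) → ℝ := fun u => ∑ i, (MvPolynomial.eval u (fc i (m i))) ^ 2 with hGdef
  have hGcont : Continuous G :=
    continuous_finset_sum _ fun i _ => (MvPolynomial.continuous_eval _).pow 2
  obtain ⟨u₀, hu₀S, hmin⟩ := hScompact.exists_isMinOn hSne hGcont.continuousOn
  set c : ℝ := G u₀ with hcdef
  have hc : 0 < c := by
    rcases lt_or_eq_of_le (Finset.sum_nonneg fun i _ => sq_nonneg
      (MvPolynomial.eval u₀ (fc i (m i)))) with h | h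
    · exact h
    · exfalso
      have hall : ∀ i, MvPolynomial.eval u₀ (fc i (m i)) = 0 := by
        intro i
        have := (Finset.sum_eq_zero_iff_of_nonneg fun i _ =>
          sq_nonneg (MvPolynomial.eval u₀ (fc i (m i)))).1 h.symm i (Finset.mem_univ i)
        exact pow_eq_zero_iff (n := 2) (by omega) |>.1 this
      have : u₀ = 0 := hsol u₀ hall
      have h1 : W u₀ = 1 := hu₀S
      rw [this, hW0] at h1
      norm_num at h1
  set c₀ : ℝ := Real.sqrt (c / n) with hc₀def
  have hc₀ : 0 < c₀ := Real.sqrt_pos.2 (div_pos hc (Nat.cast_pos.2 hn))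
  have hc₀sq : (n : ℝ) * c₀ ^ 2 = c := by
    rw [hc₀def, Real.sq_sqrt (le_of_lt (div_pos hc (Nat.cast_pos.2 hn)))]
    field_simp
  have hpick : ∀ u ∈ S, ∃ i, c₀ ≤ |MvPolynomial.eval u (fc i (m i))| := by
    intro u hu
    by_contra hcon
    push_neg at hcon
    have hlt : G u < c := by
      calc G u = ∑ i, (MvPolynomial.eval u (fc i (m i))) ^ 2 := rfl
      _ < ∑ _i : Fin n, c₀ ^ 2 := by
          apply Finset.sum_lt_sum_of_nonempty (Finset.univ_nonempty_iff.2 ⟨⟨0, hn⟩⟩)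
          intro i _
          have h1 : |MvPolynomial.eval u (fc i (m i))| < c₀ := hcon i
          calc (MvPolynomial.eval u (fc i (m i))) ^ 2
              = |MvPolynomial.eval u (fc i (m i))| ^ 2 := (sq_abs _).symm
          _ < c₀ ^ 2 := by
              apply pow_lt_pow_left₀ h1 (abs_nonneg _) (by omega)
      _ = (n : ℝ) * c₀ ^ 2 := by rw [Finset.sum_const]; simp [mul_comm]
      _ = c := hc₀sq
    exact absurd (hmin hu) (not_le.2 hlt)
  set Bfun : (Fin n → ℝ) → ℝ := fun u =>
    ∑ i, ∑ l ∈ Finset.Icc 1 (m i), |MvPolynomial.eval u (fc i l)| with hBfundef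
  have hBcont : Continuous Bfun :=
    continuous_finset_sum _ fun i _ => continuous_finset_sum _ fun l _ =>
      (MvPolynomial.continuous_eval _).abs
  obtain ⟨u₁, hu₁S, hmax⟩ := hScompact.exists_isMaxOn hSne hBcont.continuousOn
  set B : ℝ := Bfun u₁ with hBdef
  have hB0 : 0 ≤ B :=
    Finset.sum_nonneg fun i _ => Finset.sum_nonneg fun l _ => abs_nonneg _
  have hBbound : ∀ u ∈ S, Bfun u ≤ B := fun u hu => hmax hu
  set Λ : ℝ := max 1 ((B + R + 1) / c₀) with hΛdef
  have hΛ1 : 1 ≤ Λ := le_max_left _ _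
  refine ⟨Λ ^ N, pow_nonneg (by linarith) _, ?_⟩
  intro x hFx
  rcases eq_or_ne x 0 with rfl | hx0
  · rw [norm_zero]; exact pow_nonneg (by linarith) _
  have hWx : 0 < W x := hWpos x hx0
  set lam : ℝ := (W x) ^ ((2 * N : ℝ))⁻¹ with hlamdef
  have hlam : 0 < lam := Real.rpow_pos_of_pos hWx _
  have h2N : (2 * N : ℝ) ≠ 0 := by positivity
  have hlampow : lam ^ (2 * N) = W x := by
    rw [hlamdef, ← Real.rpow_natCast ((W x) ^ ((2 * N : ℝ))⁻¹) (2 * N), ← Real.rpow_mul hWx.le]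
    rw [show ((2 * N : ℕ) : ℝ) = (2 * N : ℝ) by push_cast; ring]
    rw [inv_mul_cancel₀ h2N, Real.rpow_one]
  set u : Fin n → ℝ := fun j => x j / lam ^ s j with hudef
  have hxu : x = fun j => lam ^ s j * u j := by
    funext j
    rw [hudef]
    field_simp
  have hWu : W u = 1 := by
    have h1 : W x = lam ^ (2 * N) * W u := by
      conv_lhs => rw [hxu]
      exact hWscale lam hlam u
    rw [hlampow] at h1
    have := hWx.ne'
    field_simp at h1 ⊢
    linarith [h1]
  have huS : u ∈ S := hWu
  obtain ⟨i₀, hi₀⟩ := hpick u huS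
  have hFxi : Fmap f x i₀ = ∑ l ∈ Finset.Icc 1 (m i₀), lam ^ l * MvPolynomial.eval u (fc i₀ l) := by
    show MvPolynomial.eval x (f i₀) = _
    rw [hdecomp i₀, map_sum]
    apply Finset.sum_congr rfl
    intro l hl
    conv_lhs => rw [hxu]
    exact hqh i₀ l hl lam hlam u
  -- show lam ≤ Λ
  have hlamΛ : lam ≤ Λ := by
    by_contra hcon
    push_neg at hcon
    have hlam1 : 1 ≤ lam := le_trans hΛ1 hcon.le
    have hlamc₀ : B + R + 1 < lam * c₀ := by
      have h1 : (B + R + 1) / c₀ < lam := lt_of_le_of_lt (le_max_right _ _) hcon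
      calc B + R + 1 = ((B + R + 1) / c₀) * c₀ := by field_simp
      _ < lam * c₀ := by apply mul_lt_mul_of_pos_right h1 hc₀
    set M₀ : ℕ := m i₀ with hM₀def
    have hM₀ : 1 ≤ M₀ := hm i₀
    have hsplit : Fmap f x i₀ =
        (∑ l ∈ Finset.Icc 1 (M₀ - 1), lam ^ l * MvPolynomial.eval u (fc i₀ l))
        + lam ^ M₀ * MvPolynomial.eval u (fc i₀ M₀) := by
      rw [hFxi]
      have : M₀ = (M₀ - 1) + 1 := by omega
      rw [this, Finset.sum_Icc_succ_top (by omega)]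
      rw [← this]
    set T : ℝ := ∑ l ∈ Finset.Icc 1 (M₀ - 1), lam ^ l * MvPolynomial.eval u (fc i₀ l) with hTdef
    have hT : |T| ≤ lam ^ (M₀ - 1) * B := by
      calc |T| ≤ ∑ l ∈ Finset.Icc 1 (M₀ - 1), |lam ^ l * MvPolynomial.eval u (fc i₀ l)| :=
        Finset.abs_sum_le_sum_abs _ _
      _ ≤ ∑ l ∈ Finset.Icc 1 (M₀ - 1), lam ^ (M₀ - 1) * |MvPolynomial.eval u (fc i₀ l)| := by
          apply Finset.sum_le_sum
          intro l hl
          rw [abs_mul, abs_of_pos (pow_pos hlam _)]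
          apply mul_le_mul_of_nonneg_right _ (abs_nonneg _)
          exact pow_le_pow_right₀ hlam1 (Finset.mem_Icc.1 hl).2
      _ = lam ^ (M₀ - 1) * ∑ l ∈ Finset.Icc 1 (M₀ - 1), |MvPolynomial.eval u (fc i₀ l)| := by
          rw [Finset.mul_sum]
      _ ≤ lam ^ (M₀ - 1) * B := by
          apply mul_le_mul_of_nonneg_left _ (pow_nonneg hlam.le _)
          calc ∑ l ∈ Finset.Icc 1 (M₀ - 1), |MvPolynomial.eval u (fc i₀ l)|
              ≤ ∑ l ∈ Finset.Icc 1 M₀, |MvPolynomial.eval u (fc i₀ l)| := by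
                apply Finset.sum_le_sum_of_subset_of_nonneg
                · exact Finset.Icc_subset_Icc_right (by omega)
                · intro l _ _; exact abs_nonneg _
          _ ≤ Bfun u := Finset.single_le_sum
                (f := fun i => ∑ l ∈ Finset.Icc 1 (m i), |MvPolynomial.eval u (fc i l)|)
                (fun i _ => Finset.sum_nonneg fun l _ => abs_nonneg _) (Finset.mem_univ i₀)
          _ ≤ B := hBbound u huS
    have hmain : lam ^ (M₀ - 1) * (lam * c₀ - B) ≤ |Fmap f x i₀| := by
      have h1 : lam ^ M₀ * c₀ ≤ lam ^ M₀ * |MvPolynomial.eval u (fc i₀ M₀)| :=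
        mul_le_mul_of_nonneg_left hi₀ (pow_nonneg hlam.le _)
      have h2 : |Fmap f x i₀| ≥ lam ^ M₀ * |MvPolynomial.eval u (fc i₀ M₀)| - |T| := by
        rw [hsplit]
        have := abs_add_le T (lam ^ M₀ * MvPolynomial.eval u (fc i₀ M₀))
        have habs : |lam ^ M₀ * MvPolynomial.eval u (fc i₀ M₀)|
            = lam ^ M₀ * |MvPolynomial.eval u (fc i₀ M₀)| := by
          rw [abs_mul, abs_of_pos (pow_pos hlam _)]
        have h3 : |lam ^ M₀ * MvPolynomial.eval u (fc i₀ M₀)| ≤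
            |T + lam ^ M₀ * MvPolynomial.eval u (fc i₀ M₀)| + |T| := by
          calc |lam ^ M₀ * MvPolynomial.eval u (fc i₀ M₀)|
              = |(T + lam ^ M₀ * MvPolynomial.eval u (fc i₀ M₀)) + (-T)| := by ring_nf
          _ ≤ |T + lam ^ M₀ * MvPolynomial.eval u (fc i₀ M₀)| + |(-T)| := abs_add_le _ _
          _ = |T + lam ^ M₀ * MvPolynomial.eval u (fc i₀ M₀)| + |T| := by rw [abs_neg]
        linarith [h3, habs]
      have hpowsplit : lam ^ M₀ = lam ^ (M₀ - 1) * lam := by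
        conv_lhs => rw [show M₀ = (M₀ - 1) + 1 by omega]
        rw [pow_succ]
      calc lam ^ (M₀ - 1) * (lam * c₀ - B)
          = lam ^ M₀ * c₀ - lam ^ (M₀ - 1) * B := by rw [hpowsplit]; ring
      _ ≤ lam ^ M₀ * |MvPolynomial.eval u (fc i₀ M₀)| - |T| := by linarith [h1, hT]
      _ ≤ |Fmap f x i₀| := h2
    have hfinal : R + 1 ≤ |Fmap f x i₀| := by
      calc R + 1 ≤ lam * c₀ - B := by linarith
      _ = 1 * (lam * c₀ - B) := by ring
      _ ≤ lam ^ (M₀ - 1) * (lam * c₀ - B) := by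
          have hpow1 : (1:ℝ) ≤ lam ^ (M₀ - 1) := one_le_pow₀ hlam1
          nlinarith [hpow1]
      _ ≤ |Fmap f x i₀| := hmain
    have : |Fmap f x i₀| ≤ ‖Fmap f x‖ := by
      have := norm_le_pi_norm (Fmap f x) i₀
      simpa [Real.norm_eq_abs] using this
    linarith
  -- conclude
  rw [hxu]
  apply pi_norm_le_iff_of_nonneg (pow_nonneg (by linarith) _) |>.2
  intro j
  have huj : |u j| ≤ 1 := huS_abs u huS j
  rw [Real.norm_eq_abs, abs_mul, abs_of_pos (pow_pos hlam _)]
  calc lam ^ s j * |u j| ≤ lam ^ s j * 1 := by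
        apply mul_le_mul_of_nonneg_left huj (pow_nonneg hlam.le _)
  _ = lam ^ s j := mul_one _
  _ ≤ Λ ^ s j := pow_le_pow_left₀ hlam.le hlamΛ _
  _ ≤ Λ ^ N := pow_le_pow_right₀ hΛ1 (Nat.le_of_dvd (by omega) (hdvd j))

end CimaAux

namespace CimaAux

open Set

/-- Uniqueness of lifts through a local homeomorphism on an interval. -/
theorem lift_unique {X Y : Type*} [TopologicalSpace X] [T2Space X] [TopologicalSpace Y]
    (F : X → Y)
    (hch : ∀ x, ∃ e : OpenPartialHomeomorph X Y, x ∈ e.source ∧ ⇑e = F)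
    {u v : ℝ} (huv : u ≤ v) (α β : ℝ → X)
    (hα : ContinuousOn α (Set.Icc u v)) (hβ : ContinuousOn β (Set.Icc u v))
    (hlift : ∀ t ∈ Set.Icc u v, F (α t) = F (β t))
    (hstart : α u = β u) : ∀ t ∈ Set.Icc u v, α t = β t := by
  haveI : PreconnectedSpace ↥(Set.Icc u v) := Subtype.preconnectedSpace isPreconnected_Icc
  set αr : ↥(Set.Icc u v) → X := (Set.Icc u v).restrict α with hαr
  set βr : ↥(Set.Icc u v) → X := (Set.Icc u v).restrict β with hβr
  have hαrc : Continuous αr := hα.restrict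
  have hβrc : Continuous βr := hβ.restrict
  set A : Set ↥(Set.Icc u v) := {p | αr p = βr p} with hA
  have hAclosed : IsClosed A := isClosed_eq hαrc hβrc
  have hAopen : IsOpen A := by
    rw [isOpen_iff_forall_mem_open]
    intro p hp
    obtain ⟨e, hes, hecoe⟩ := hch (αr p)
    refine ⟨αr ⁻¹' e.source ∩ βr ⁻¹' e.source, ?_, ?_, ?_⟩
    · intro q hq
      have h1 : F (αr q) = F (βr q) := hlift q q.2
      have h2 : e (αr q) = e (βr q) := by rw [hecoe]; exact h1
      exact e.injOn hq.1 hq.2 h2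
    · exact (e.open_source.preimage hαrc).inter (e.open_source.preimage hβrc)
    · have hp' : αr p = βr p := hp
      exact ⟨hes, by show βr p ∈ e.source; rw [← hp']; exact hes⟩
  have hAne : A.Nonempty := ⟨⟨u, Set.left_mem_Icc.2 huv⟩, hstart⟩
  have : A = Set.univ := IsClopen.eq_univ ⟨hAclosed, hAopen⟩ hAne
  intro t ht
  have : (⟨t, ht⟩ : ↥(Set.Icc u v)) ∈ A := this ▸ Set.mem_univ _
  exact this

end CimaAux

namespace CimaAux

open Set

variable {n : ℕ}

theorem evenly_covered (F : (Fin n → ℝ) → (Fin n → ℝ)) (hcont : Continuous F)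
    (hch : ∀ x, ∃ e : OpenPartialHomeomorph (Fin n → ℝ) (Fin n → ℝ), x ∈ e.source ∧ ⇑e = F)
    (hprop : ∀ K : Set (Fin n → ℝ), IsCompact K → IsCompact (F ⁻¹' K)) (y : Fin n → ℝ) :
    ∃ Wo : Set (Fin n → ℝ), IsOpen Wo ∧ y ∈ Wo ∧ ∀ x, F x ∈ Wo →
      ∃ (U : Set (Fin n → ℝ)) (g : (Fin n → ℝ) → (Fin n → ℝ)),
        IsOpen U ∧ x ∈ U ∧ ContinuousOn g Wo ∧ (∀ w ∈ Wo, F (g w) = w) ∧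
        (∀ z ∈ U, F z ∈ Wo → g (F z) = z) := by
  classical
  have hclosedmap : IsClosedMap F :=
    (isProperMap_iff_isCompact_preimage.2 ⟨hcont, fun K hK => hprop K hK⟩).isClosedMap
  choose e hmem hcoe using hch
  set fib : Set (Fin n → ℝ) := F ⁻¹' {y} with hfib
  have hfibcmp : IsCompact fib := hprop _ isCompact_singleton
  have hcover : fib ⊆ ⋃ x ∈ fib, (e x).source := fun z hz =>
    Set.mem_biUnion hz (hmem z)
  obtain ⟨t, hts, htfin, htcov⟩ := hfibcmp.elim_finite_subcover_image
    (fun x _ => (e x).open_source) hcover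
  set C : Set (Fin n → ℝ) := (⋃ x ∈ t, (e x).source)ᶜ with hC
  have hCclosed : IsClosed C := (isOpen_biUnion fun x _ => (e x).open_source).isClosed_compl
  set Wo : Set (Fin n → ℝ) := (⋂ x ∈ t, (e x).target) ∩ (F '' C)ᶜ with hWo
  have hWopen : IsOpen Wo := by
    apply IsOpen.inter
    · exact htfin.isOpen_biInter fun x _ => (e x).open_target
    · exact (hclosedmap C hCclosed).isOpen_compl
  have hymem : y ∈ Wo := by
    constructor
    · apply Set.mem_biInter
      intro x hx
      have hxfib : x ∈ fib := hts hx
      have : e x x ∈ (e x).target := (e x).map_source (hmem x)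
      rwa [show e x x = y by rw [hcoe x]; exact hxfib] at this
    · rintro ⟨z, hzC, hz⟩
      have hzfib : z ∈ fib := by simp only [hfib, Set.mem_preimage, hz, Set.mem_singleton_iff]
      exact hzC (htcov hzfib)
  refine ⟨Wo, hWopen, hymem, ?_⟩
  intro x hx
  have hxC : x ∉ C := by
    intro hxC
    exact hx.2 ⟨x, hxC, rfl⟩
  have : x ∈ ⋃ x' ∈ t, (e x').source := not_not.1 hxC
  obtain ⟨x₀, hx₀t, hxsrc⟩ := by simpa using this
  have hWsub : Wo ⊆ (e x₀).target := fun w hw => by have := hw.1; simp only [Set.mem_iInter] at this; exact this x₀ hx₀t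
  refine ⟨(e x₀).source, (e x₀).symm, (e x₀).open_source, hxsrc, ?_, ?_, ?_⟩
  · exact (e x₀).continuousOn_symm.mono hWsub
  · intro w hw
    rw [← hcoe x₀]
    exact (e x₀).right_inv (hWsub hw)
  · intro z hz _
    rw [← hcoe x₀]
    exact (e x₀).left_inv hz

end CimaAux

namespace CimaAux

open Set

variable {n : ℕ}

theorem lift_exists (F : (Fin n → ℝ) → (Fin n → ℝ)) (hcont : Continuous F)
    (hch : ∀ x, ∃ e : OpenPartialHomeomorph (Fin n → ℝ) (Fin n → ℝ), x ∈ e.source ∧ ⇑e = F)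
    (hprop : ∀ K : Set (Fin n → ℝ), IsCompact K → IsCompact (F ⁻¹' K))
    (γ : ℝ → (Fin n → ℝ)) (hγ : Continuous γ) (x₀ : Fin n → ℝ) (hx₀ : F x₀ = γ 0) :
    ∃ α : ℝ → (Fin n → ℝ), Continuous α ∧ α 0 = x₀ ∧
      ∀ t ∈ Set.Icc (0:ℝ) 1, F (α t) = γ t := by
  classical
  choose W hWopen hWmem hWsec using evenly_covered F hcont hch hprop
  obtain ⟨δ, hδ, hleb⟩ := lebesgue_number_lemma_of_metric (isCompact_Icc (a := (0:ℝ)) (b := 1))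
    (fun τ : ℝ => (hγ.isOpen_preimage _ (hWopen (γ τ)))) (fun τ hτ => Set.mem_iUnion.2 ⟨τ, hWmem (γ τ)⟩)
  obtain ⟨k, hk⟩ := exists_nat_one_div_lt hδ
  set K : ℕ := k + 1 with hK
  have hKpos : (0:ℝ) < K := by positivity
  have hstep : (1:ℝ) / K < δ := by
    have h1 : ((K:ℝ)) = (k:ℝ) + 1 := by rw [hK]; push_cast; ring
    rw [h1]; exact hk
  have main : ∀ j : ℕ, ∃ α : ℝ → (Fin n → ℝ), Continuous α ∧ α 0 = x₀ ∧
      ∀ t ∈ Set.Icc (0:ℝ) (min ((j:ℝ)/K) 1), F (α t) = γ t := by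
    intro j
    induction j with
    | zero =>
        refine ⟨fun _ => x₀, continuous_const, rfl, ?_⟩
        intro t ht
        simp only [Nat.cast_zero, zero_div] at ht
        have h0 : min (0:ℝ) 1 = 0 := min_eq_left zero_le_one
        rw [h0] at ht
        have : t = 0 := le_antisymm ht.2 ht.1
        rw [this, hx₀]
    | succ j ih =>
        obtain ⟨α, hαc, hα0, hαlift⟩ := ih
        set a : ℝ := min ((j:ℝ)/K) 1 with ha
        set b : ℝ := min (((j+1:ℕ):ℝ)/K) 1 with hb
        have hab : a ≤ b := by
          rw [ha, hb]
          apply min_le_min _ (le_refl 1)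
          gcongr
          push_cast; linarith
        have ha01 : a ∈ Set.Icc (0:ℝ) 1 := ⟨le_min (by positivity) zero_le_one, min_le_right _ _⟩
        have hj1 : ((j+1:ℕ):ℝ)/K = (j:ℝ)/K + 1/K := by push_cast; ring
        have hba : b - a ≤ 1 / K := by
          rw [ha, hb, hj1]
          rcases le_total ((j:ℝ)/K) 1 with h | h
          · rw [min_eq_left h]
            have h2 : min ((j:ℝ)/K + 1/K) 1 ≤ (j:ℝ)/K + 1/K := min_le_left _ _
            linarith
          · rw [min_eq_right h]
            have h2 : min ((j:ℝ)/K + 1/K) 1 ≤ 1 := min_le_right _ _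
            have h3 : (0:ℝ) < 1/K := by positivity
            linarith
        obtain ⟨τ, hτ⟩ := hleb a ha01
        have hIccW : ∀ t ∈ Set.Icc a b, γ t ∈ W (γ τ) := by
          intro t ht
          apply hτ
          rw [Metric.mem_ball, Real.dist_eq, abs_of_nonneg (by linarith [ht.1])]
          linarith [ht.2, hstep, hba]
        have hFa : F (α a) = γ a := hαlift a ⟨ha01.1, le_refl a⟩
        have hFaW : F (α a) ∈ W (γ τ) := by
          rw [hFa]; exact hIccW a ⟨le_refl a, hab⟩
        obtain ⟨U, g, hUopen, hxU, hgcont, hgsec, hginv⟩ := hWsec (γ τ) (α a) hFaW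
        refine ⟨fun t => if t ≤ a then α t else g (γ (min t b)), ?_, ?_, ?_⟩
        · apply continuous_if_le continuous_id continuous_const hαc.continuousOn
          · apply ContinuousOn.comp hgcont ((hγ.comp (continuous_id.min continuous_const)).continuousOn)
            intro t (hta : a ≤ t)
            exact hIccW _ ⟨le_min hta hab, min_le_right _ _⟩
          · intro t (hta : t = a)
            rw [hta, min_eq_left hab, ← hFa, hginv (α a) hxU hFaW]
        · have h0a : (0:ℝ) ≤ a := ha01.1
          simp only [if_pos h0a, hα0]
        · intro t ht
          rcases le_or_gt t a with hta | hta
          · simp only [if_pos hta]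
            exact hαlift t ⟨ht.1, hta⟩
          · simp only [if_neg (not_le.2 hta)]
            have htb : t ≤ b := ht.2
            rw [min_eq_left htb]
            exact hgsec _ (hIccW t ⟨hta.le, htb⟩)
  obtain ⟨α, hαc, hα0, hαlift⟩ := main K
  refine ⟨α, hαc, hα0, ?_⟩
  intro t ht
  apply hαlift
  have : ((K:ℝ))/K = 1 := div_self hKpos.ne'
  rw [this, min_self]
  exact ht

end CimaAux

namespace CimaAux

open Set Filter

variable {n : ℕ}

theorem injective_of_proper (F : (Fin n → ℝ) → (Fin n → ℝ)) (hcont : Continuous F)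
    (hch : ∀ x, ∃ e : OpenPartialHomeomorph (Fin n → ℝ) (Fin n → ℝ), x ∈ e.source ∧ ⇑e = F)
    (hprop : ∀ K : Set (Fin n → ℝ), IsCompact K → IsCompact (F ⁻¹' K)) :
    Function.Injective F := by
  classical
  intro p q hpq
  set y₀ : Fin n → ℝ := F p with hy₀
  set σ : (Fin n → ℝ) → ℝ → (Fin n → ℝ) := fun x t => F x + t • (y₀ - F x) with hσ
  have hσc : ∀ x, Continuous (σ x) := fun x =>
    continuous_const.add (continuous_id.smul continuous_const)
  have hσ0 : ∀ x, σ x 0 = F x := fun x => by simp [hσ]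
  have hσ1 : ∀ x, σ x 1 = y₀ := fun x => by simp [hσ]
  have hliftex : ∀ x, ∃ α, Continuous α ∧ α 0 = x ∧ ∀ t ∈ Set.Icc (0:ℝ) 1, F (α t) = σ x t :=
    fun x => lift_exists F hcont hch hprop (σ x) (hσc x) x (hσ0 x).symm
  choose L hLc hL0 hLlift using hliftex
  set Φ : (Fin n → ℝ) → (Fin n → ℝ) := fun x => L x 1 with hΦ
  have hfix : ∀ x, F x = y₀ → Φ x = x := by
    intro x hx
    have := lift_unique F hch zero_le_one (L x) (fun _ => x) (hLc x).continuousOn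
      continuous_const.continuousOn
      (fun t ht => by rw [hLlift x t ht]; show F x + t • (y₀ - F x) = F x; rw [hx]; simp) (by rw [hL0])
    exact this 1 ⟨zero_le_one, le_refl 1⟩
  have hlc : IsLocallyConstant Φ := by
    rw [IsLocallyConstant.iff_eventually_eq]
    intro x
    set α : ℝ → (Fin n → ℝ) := L x with hα
    choose W hWopen hWmem hWsec using evenly_covered F hcont hch hprop
    obtain ⟨δ, hδ, hleb⟩ := lebesgue_number_lemma_of_metric
      (isCompact_Icc (a := (0:ℝ)) (b := 1))
      (fun τ : ℝ => ((hσc x).isOpen_preimage _ (hWopen (σ x τ))))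
      (fun τ hτ => Set.mem_iUnion.2 ⟨τ, hWmem (σ x τ)⟩)
    obtain ⟨k, hk⟩ := exists_nat_one_div_lt hδ
    set K : ℕ := k + 1 with hK
    have hKpos : (0:ℝ) < K := by positivity
    have hstep : (1:ℝ) / K < δ := by
      have h1 : ((K:ℝ)) = (k:ℝ) + 1 := by rw [hK]; push_cast; ring
      rw [h1]; exact hk
    set tj : ℕ → ℝ := fun j => min ((j:ℝ)/K) 1 with htj
    have htj0 : tj 0 = 0 := by simp [htj]
    have htjK : tj K = 1 := by
      simp only [htj]
      rw [div_self hKpos.ne', min_self]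
    have htjmem : ∀ j, tj j ∈ Set.Icc (0:ℝ) 1 :=
      fun j => ⟨le_min (by positivity) zero_le_one, min_le_right _ _⟩
    have htjmono : ∀ j, tj j ≤ tj (j+1) := by
      intro j
      apply min_le_min _ (le_refl 1)
      gcongr
      push_cast; linarith
    have htjgap : ∀ j, tj (j+1) - tj j ≤ 1/K := by
      intro j
      have hj1 : ((j+1:ℕ):ℝ)/K = (j:ℝ)/K + 1/K := by push_cast; ring
      simp only [htj]
      rw [show (((j:ℕ)+1:ℕ):ℝ) = ((j+1:ℕ):ℝ) by norm_cast, hj1]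
      rcases le_total ((j:ℝ)/K) 1 with h | h
      · rw [min_eq_left h]
        have h2 : min ((j:ℝ)/K + 1/K) 1 ≤ (j:ℝ)/K + 1/K := min_le_left _ _
        linarith
      · rw [min_eq_right h]
        have h2 : min ((j:ℝ)/K + 1/K) 1 ≤ 1 := min_le_right _ _
        have h3 : (0:ℝ) < 1/K := by positivity
        linarith
    have hIccsub : ∀ j, Set.Icc (tj j) (tj (j+1)) ⊆ Set.Icc (0:ℝ) 1 := by
      intro j t ht
      exact ⟨le_trans (htjmem j).1 ht.1, le_trans ht.2 (htjmem (j+1)).2⟩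
    have hdata : ∀ j : ℕ, ∃ (Wj U : Set (Fin n → ℝ)) (g : (Fin n → ℝ) → (Fin n → ℝ)),
        IsOpen Wj ∧ (∀ t ∈ Set.Icc (tj j) (tj (j+1)), σ x t ∈ Wj) ∧ IsOpen U ∧
        α (tj j) ∈ U ∧ ContinuousOn g Wj ∧ (∀ w ∈ Wj, F (g w) = w) ∧
        (∀ z ∈ U, F z ∈ Wj → g (F z) = z) := by
      intro j
      obtain ⟨τ, hτ⟩ := hleb (tj j) (htjmem j)
      have hsub : ∀ t ∈ Set.Icc (tj j) (tj (j+1)), σ x t ∈ W (σ x τ) := by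
        intro t ht
        apply hτ
        rw [Metric.mem_ball, Real.dist_eq, abs_of_nonneg (by linarith [ht.1])]
        linarith [ht.2, htjgap j, hstep]
      have hFα : F (α (tj j)) ∈ W (σ x τ) := by
        rw [hLlift x (tj j) (htjmem j)]
        exact hsub (tj j) ⟨le_refl _, htjmono j⟩
      obtain ⟨U, g, hUopen, hαU, hgcont, hgsec, hginv⟩ := hWsec (σ x τ) (α (tj j)) hFα
      exact ⟨W (σ x τ), U, g, hWopen _, hsub, hUopen, hαU, hgcont, hgsec, hginv⟩
    choose Wj Uj gj hWjopen hWjsub hUjopen hUjmem hgjcont hgjsec hgjinv using hdata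
    set z : ℕ → (Fin n → ℝ) → (Fin n → ℝ) :=
      fun j x' => if h : j = 0 then x' else gj (j-1) (σ x' (tj j)) with hz
    have hzsucc : ∀ j x', z (j+1) x' = gj j (σ x' (tj (j+1))) := by
      intro j x'
      simp only [hz, Nat.succ_ne_zero, dite_false, Nat.add_sub_cancel]
    have claim : ∀ j : ℕ, ContinuousAt (z j) x ∧ z j x = α (tj j) ∧
        (∀ᶠ x' in nhds x, ∀ β : ℝ → (Fin n → ℝ), Continuous β → β 0 = x' →
          (∀ t ∈ Set.Icc (0:ℝ) 1, F (β t) = σ x' t) → β (tj j) = z j x') := by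
      intro j
      induction j with
      | zero =>
          refine ⟨by simp only [hz]; exact continuousAt_id, ?_, ?_⟩
          · have hzz : z 0 x = x := by simp [hz]
            rw [hzz, htj0, hα, hL0]
          · apply Filter.Eventually.of_forall
            intro x' β _ hβ0 _
            rw [htj0, hβ0]
            simp [hz]
      | succ j ih =>
          obtain ⟨hcontAt, hzx, hev⟩ := ih
          have hkey : ∀ x' (β : ℝ → (Fin n → ℝ)), Continuous β → β 0 = x' →
              (∀ t ∈ Set.Icc (0:ℝ) 1, F (β t) = σ x' t) →
              (∀ t ∈ Set.Icc (tj j) (tj (j+1)), σ x' t ∈ Wj j) → z j x' ∈ Uj j →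
              β (tj j) = z j x' → β (tj (j+1)) = z (j+1) x' := by
            intro x' β hβc hβ0 hβlift hσW hzU hβj
            have hFz : F (z j x') = σ x' (tj j) := by
              rw [← hβj]; exact hβlift _ (htjmem j)
            have hstart : β (tj j) = gj j (σ x' (tj j)) := by
              rw [← hFz, hgjinv j (z j x') hzU
                (by rw [hFz]; exact hσW _ ⟨le_refl _, htjmono j⟩), hβj]
            have huniq := lift_unique F hch (htjmono j) β (fun t => gj j (σ x' t))
              hβc.continuousOn
              (ContinuousOn.comp (hgjcont j) (hσc x').continuousOn (fun t ht => hσW t ht))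
              (fun t ht => by
                rw [hβlift t (hIccsub j ht), hgjsec j _ (hσW t ht)])
              hstart
            rw [hzsucc j x']
            exact huniq (tj (j+1)) ⟨htjmono j, le_refl _⟩
          have hσcont' : Continuous (fun x' => σ x' (tj (j+1))) := by
            apply Continuous.add hcont
            exact (continuous_const.sub hcont).const_smul (tj (j+1))
          have hσmem : σ x (tj (j+1)) ∈ Wj j :=
            hWjsub j _ ⟨htjmono j, le_refl _⟩
          have hcontAt' : ContinuousAt (z (j+1)) x := by
            have h1 : ContinuousAt (gj j) (σ x (tj (j+1))) :=
              (hgjcont j).continuousAt ((hWjopen j).mem_nhds hσmem)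
            have h2 : ContinuousAt (fun x' => gj j (σ x' (tj (j+1)))) x :=
              ContinuousAt.comp (g := gj j) (f := fun x' => σ x' (tj (j+1)))
                h1 hσcont'.continuousAt
            have : (fun x' => z (j+1) x') = fun x' => gj j (σ x' (tj (j+1))) := by
              funext x'; exact hzsucc j x'
            rw [show z (j+1) = fun x' => gj j (σ x' (tj (j+1))) from this]
            exact h2
          have hzx' : z (j+1) x = α (tj (j+1)) := by
            have := hkey x α (hLc x) (hL0 x) (hLlift x) (hWjsub j)
              (by rw [hzx]; exact hUjmem j) hzx.symm
            exact this.symm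
          refine ⟨hcontAt', hzx', ?_⟩
          -- eventual conditions
          have hKcmp : IsCompact (σ x '' Set.Icc (tj j) (tj (j+1))) :=
            (isCompact_Icc).image (hσc x)
          have hKsub : σ x '' Set.Icc (tj j) (tj (j+1)) ⊆ Wj j := by
            rintro _ ⟨t, ht, rfl⟩; exact hWjsub j t ht
          obtain ⟨ε, hε, hthick⟩ :=
            hKcmp.exists_thickening_subset_open (hWjopen j) hKsub
          have hev1 : ∀ᶠ x' in nhds x, dist (F x') (F x) < ε :=
            Metric.tendsto_nhds.1 hcont.continuousAt ε hε
          have hev2 : ∀ᶠ x' in nhds x, z j x' ∈ Uj j :=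
            hcontAt.eventually_mem ((hUjopen j).mem_nhds (by rw [hzx]; exact hUjmem j))
          filter_upwards [hev, hev1, hev2] with x' h1 h2 h3
          intro β hβc hβ0 hβlift
          apply hkey x' β hβc hβ0 hβlift _ h3 (h1 β hβc hβ0 hβlift)
          intro t ht
          apply hthick
          rw [Metric.mem_thickening_iff]
          refine ⟨σ x t, Set.mem_image_of_mem _ ht, ?_⟩
          have hdiff : σ x' t - σ x t = (1 - t) • (F x' - F x) := by
            simp only [hσ]
            module
          have htmem := hIccsub j ht
          calc dist (σ x' t) (σ x t) = ‖σ x' t - σ x t‖ := dist_eq_norm _ _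
          _ = ‖(1 - t) • (F x' - F x)‖ := by rw [hdiff]
          _ = |1 - t| * ‖F x' - F x‖ := by rw [norm_smul, Real.norm_eq_abs]
          _ ≤ 1 * ‖F x' - F x‖ := by
              apply mul_le_mul_of_nonneg_right _ (norm_nonneg _)
              rw [abs_of_nonneg (by linarith [htmem.2])]
              linarith [htmem.1]
          _ = dist (F x') (F x) := by rw [one_mul, dist_eq_norm]
          _ < ε := h2
    obtain ⟨_, hzxK, hevK⟩ := claim K
    have hKne : K ≠ 0 := by omega
    have hzKconst : ∀ x', z K x' = gj (K-1) y₀ := by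
      intro x'
      simp only [hz, dif_neg hKne]
      rw [htjK, hσ1]
    filter_upwards [hevK] with x' h1
    have h2 : L x' (tj K) = z K x' := h1 (L x') (hLc x') (hL0 x') (hLlift x')
    have h3 : Φ x' = z K x' := by rw [hΦ]; rw [← htjK]; exact h2
    have h4 : Φ x = z K x := by
      rw [hΦ, ← htjK, hzxK]
    rw [h3, h4, hzKconst x', hzKconst x]
  have hconst := hlc.apply_eq_of_preconnectedSpace
  have hp : Φ p = p := hfix p rfl
  have hq : Φ q = q := hfix q hpq.symm
  rw [← hp, ← hq]
  exact hconst p q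

end CimaAux


/-- **Cima's theorem.** Let `F = (f¹,…,fⁿ) : ℝⁿ → ℝⁿ` be a polynomial map with
nowhere zero Jacobian determinant and `F(0) = 0`. Let `s = (s₁,…,sₙ)` be positive integers and
suppose each `fⁱ = Σ_{l=1}^{mᵢ} fⁱ_l` with `fⁱ_l` quasi-homogeneous of weighted degree `l`
with respect to `s` and the top part `fⁱ_{mᵢ}` not identically zero. If the system
`f¹_{m₁}(x) = ⋯ = fⁿ_{mₙ}(x) = 0` has only the trivial solution `x = 0`, then `F` is
injective. -/
theorem cima_quasi_homogeneous_injective (n : ℕ) (f : Fin n → MvPolynomial (Fin n) ℝ)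
    (hJ : ∀ x : Fin n → ℝ,
      Matrix.det (Matrix.of fun i j : Fin n =>
        MvPolynomial.eval x (MvPolynomial.pderiv j (f i))) ≠ 0)
    (h0 : ∀ i, MvPolynomial.eval (0 : Fin n → ℝ) (f i) = 0)
    (s : Fin n → ℕ) (hs : ∀ j, 0 < s j)
    (m : Fin n → ℕ) (fc : Fin n → ℕ → MvPolynomial (Fin n) ℝ)
    (hdecomp : ∀ i, f i = ∑ l ∈ Finset.Icc 1 (m i), fc i l)
    (hqh : ∀ i, ∀ l ∈ Finset.Icc 1 (m i), ∀ lam : ℝ, 0 < lam → ∀ x : Fin n → ℝ,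
      MvPolynomial.eval (fun j => lam ^ s j * x j) (fc i l) =
        lam ^ l * MvPolynomial.eval x (fc i l))
    (htop : ∀ i, fc i (m i) ≠ 0)
    (hsol : ∀ x : Fin n → ℝ, (∀ i, MvPolynomial.eval x (fc i (m i)) = 0) → x = 0) :
    Function.Injective (fun (x : Fin n → ℝ) (i : Fin n) => MvPolynomial.eval x (f i)) := by
  classical
  rcases Nat.eq_zero_or_pos n with hn | hn
  · subst hn
    intro a b _
    funext i
    exact i.elim0
  have hm : ∀ i, 1 ≤ m i := by
    intro i
    by_contra hmi
    push_neg at hmi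
    have hmi0 : m i = 0 := by omega
    have hfi : f i = 0 := by
      rw [hdecomp i, hmi0]
      rw [Finset.Icc_eq_empty (by omega)]
      exact Finset.sum_empty
    apply hJ 0
    apply Matrix.det_eq_zero_of_row_eq_zero i
    intro j
    simp [hfi]
  have hcont := CimaAux.continuous_Fmap f
  have hch := CimaAux.exists_chart f hJ
  have hprop : ∀ K : Set (Fin n → ℝ), IsCompact K → IsCompact (CimaAux.Fmap f ⁻¹' K) := by
    intro K hK
    obtain ⟨R, hR⟩ := hK.isBounded.subset_closedBall 0
    have hR0 : (0:ℝ) ≤ max R 0 := le_max_right _ _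
    obtain ⟨r, hr0, hr⟩ := CimaAux.norm_bound hn f s hs m hm fc hdecomp hqh hsol (max R 0) hR0
    apply Metric.isCompact_of_isClosed_isBounded
    · exact hK.isClosed.preimage hcont
    · apply (Metric.isBounded_closedBall (x := (0 : Fin n → ℝ)) (r := r)).subset
      intro x hx
      rw [Metric.mem_closedBall, dist_zero_right]
      apply hr
      have h1 : CimaAux.Fmap f x ∈ Metric.closedBall 0 R := hR hx
      rw [Metric.mem_closedBall, dist_zero_right] at h1
      exact le_trans h1 (le_max_left _ _)
  exact CimaAux.injective_of_proper (CimaAux.Fmap f) hcont hch hprop
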